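/- Let K₁ and K₂ be pointed open convex cones contained in the open unit ball B ⊂ ℝ³ (truncated cones with apex in B and base on the boundary sphere), and let C(K₁), C(K₂) ⊂ V be the corresponding hypercones, i.e. causal completions in the forward light cone of the hyperbolic cones on a fixed hyperboloid H determined by K₁ and K₂. Then C(K₁) and C(K₂) are spacelike separated in V if and only if K₁ ∩ K₂ = ∅. -/

import Mathlib

noncomputable section

open scoped RealInnerProductSpace

abbrev E3 := EuclideanSpace ℝ (Fin 3)

/-- The open forward light cone `V`. -/
def Vcone : Set (ℝ × E3) := {x | ‖x.2‖ < x.1}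

/-- The Minkowski quadratic form `x² = x₀² − |𝐱|²`. -/
def minkQ (x : ℝ × E3) : ℝ := x.1 ^ 2 - ‖x.2‖ ^ 2

/-- The fixed hyperboloid `H` (here with τ = 1) inside `V`. -/
def Hyp1 : Set (ℝ × E3) := {x | x.1 = Real.sqrt (‖x.2‖ ^ 2 + 1)}

/-- The Beltrami–Klein projection. -/
def klein (a : ℝ × E3) : E3 := a.1⁻¹ • a.2

/-- The truncated cone in the unit ball with apex `a` and boundary set `L ⊂ S²`:
the union of the open segments from `a` to the points of `L`. -/
def segCone (a : E3) (L : Set E3) : Set E3 :=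
  {x | ∃ l ∈ L, ∃ t ∈ Set.Ioo (0 : ℝ) 1, x = a + t • (l - a)}

/-- A pointed open convex truncated cone in the open unit ball. -/
def IsTruncCone (K : Set E3) : Prop :=
  IsOpen K ∧ Convex ℝ K ∧
    ∃ a : E3, ‖a‖ < 1 ∧ ∃ L : Set E3, (∀ l ∈ L, ‖l‖ = 1) ∧ K = segCone a L

/-- The hypercone `C(K) ⊂ V`: the causal completion in `V` of the hyperbolic cone on
`H` corresponding to `K`, i.e. the points of `V` whose causal influence meets `H`
only inside the hyperbolic cone. -/
def hypCone (K : Set E3) : Set (ℝ × E3) :=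
  {x ∈ Vcone | ∀ y ∈ Hyp1, 0 ≤ minkQ (x - y) → klein y ∈ K}

/-! ### Auxiliary lemmas -/

lemma minkQ_expand (u v : ℝ × E3) :
    minkQ (u - v) = minkQ u + minkQ v - 2*(u.1*v.1 - ⟪u.2, v.2⟫) := by
  simp only [minkQ, Prod.fst_sub, Prod.snd_sub]
  rw [norm_sub_sq_real]
  ring

lemma minkQ_add_smul (y d : ℝ × E3) (s : ℝ) :
    minkQ (y + s • d) = minkQ y + 2*s*(y.1*d.1 - ⟪y.2, d.2⟫) + s^2 * minkQ d := by
  simp only [minkQ, Prod.fst_add, Prod.snd_add, Prod.smul_fst, Prod.smul_snd, smul_eq_mul]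
  rw [norm_add_sq_real, real_inner_smul_right, norm_smul]
  simp only [Real.norm_eq_abs, mul_pow, sq_abs]
  ring

lemma minkQ_smul (c : ℝ) (u : ℝ × E3) : minkQ (c • u) = c^2 * minkQ u := by
  simp only [minkQ, Prod.smul_fst, Prod.smul_snd, smul_eq_mul, norm_smul,
    Real.norm_eq_abs, mul_pow, sq_abs]
  ring

lemma hyp_sq {z : ℝ × E3} (hz : z ∈ Hyp1) : z.1^2 = ‖z.2‖^2 + 1 ∧ 0 < z.1 := by
  have hz' : z.1 = Real.sqrt (‖z.2‖^2 + 1) := hz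
  have hpos : (0:ℝ) < ‖z.2‖^2 + 1 := by positivity
  constructor
  · rw [hz']; exact Real.sq_sqrt hpos.le
  · rw [hz']; exact Real.sqrt_pos.mpr hpos

lemma mem_hyp_of (z : ℝ × E3) (h1 : z.1^2 = ‖z.2‖^2 + 1) (h2 : 0 < z.1) : z ∈ Hyp1 := by
  show z.1 = Real.sqrt (‖z.2‖^2 + 1)
  rw [← h1, Real.sqrt_sq h2.le]

/-- Two points of the hyperboloid that are causally related coincide. -/
lemma hyp_rigid {z y : ℝ × E3} (hz : z ∈ Hyp1) (hy : y ∈ Hyp1)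
    (h : 0 ≤ minkQ (z - y)) : z = y := by
  obtain ⟨hz1, hz2⟩ := hyp_sq hz
  obtain ⟨hy1, hy2⟩ := hyp_sq hy
  have hQz : minkQ z = 1 := by simp only [minkQ]; linarith
  have hQy : minkQ y = 1 := by simp only [minkQ]; linarith
  rw [minkQ_expand, hQz, hQy] at h
  have hzy : z.1 * y.1 ≤ 1 + ⟪z.2, y.2⟫ := by linarith
  have hsq : (z.1 * y.1)^2 = (‖z.2‖^2 + 1) * (‖y.2‖^2 + 1) := by rw [mul_pow, hz1, hy1]
  obtain ⟨hCS1, hCS2⟩ := abs_le.mp (abs_real_inner_le_norm z.2 y.2)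
  have hpos : 0 < z.1 * y.1 := mul_pos hz2 hy2
  have h2 : ‖z.2 - y.2‖^2 ≤ 0 := by
    rw [norm_sub_sq_real]
    nlinarith [norm_nonneg z.2, norm_nonneg y.2,
      mul_nonneg (norm_nonneg z.2) (norm_nonneg y.2),
      mul_nonneg (sub_nonneg.mpr hzy) (le_of_lt (lt_of_lt_of_le hpos hzy))]
  have h3 : z.2 = y.2 := by
    have h4 : ‖z.2 - y.2‖ = 0 := by nlinarith [norm_nonneg (z.2 - y.2)]
    exact sub_eq_zero.mp (norm_eq_zero.mp h4)
  have h5 : z.1 = y.1 := by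
    have hz' : z.1 = Real.sqrt (‖z.2‖^2 + 1) := hz
    have hy' : y.1 = Real.sqrt (‖y.2‖^2 + 1) := hy
    rw [hz', hy', h3]
  exact Prod.ext h5 h3

set_option maxHeartbeats 1000000 in
/-- Special case `(x-y).1 > 0` of the Cauchy-surface lemma: if `x` and `y` in `V` are
causally related, there is a point of the hyperboloid causally related to both. -/
lemma exists_hyp_aux (x y : ℝ × E3) (hy : y ∈ Vcone)
    (hd1 : 0 < (x - y).1) (h : 0 ≤ minkQ (x - y)) :
    ∃ z ∈ Hyp1, 0 ≤ minkQ (x - z) ∧ 0 ≤ minkQ (y - z) := by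
  set d := x - y with hdd
  set B := y.1 * d.1 - ⟪y.2, d.2⟫ with hB
  set D := minkQ d with hD
  set q := minkQ y with hq
  have hyn : ‖y.2‖ < y.1 := hy
  have hDnn : (0:ℝ) ≤ D := h
  have hd2 : ‖d.2‖ ≤ d.1 := by
    have hh : (0:ℝ) ≤ d.1^2 - ‖d.2‖^2 := hDnn
    nlinarith [norm_nonneg d.2]
  have hBpos : 0 < B := by
    have hin := real_inner_le_norm y.2 d.2
    rw [hB]
    nlinarith [norm_nonneg y.2, norm_nonneg d.2]
  have hqpos : 0 < q := by
    rw [hq]; simp only [minkQ]; nlinarith [norm_nonneg y.2]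
  have hrev : q * D ≤ B^2 := by
    obtain ⟨hCS1, hCS2⟩ := abs_le.mp (abs_real_inner_le_norm y.2 d.2)
    have hab : ‖y.2‖ * ‖d.2‖ ≤ y.1 * d.1 := by
      nlinarith [norm_nonneg y.2, norm_nonneg d.2]
    have k1 : 0 ≤ (‖y.2‖ * ‖d.2‖ - ⟪y.2, d.2⟫) * (y.1 * d.1 - ‖y.2‖ * ‖d.2‖) :=
      mul_nonneg (by linarith) (by linarith)
    have k2 : 0 ≤ (‖y.2‖ * ‖d.2‖ - ⟪y.2, d.2⟫) * (y.1 * d.1 - ⟪y.2, d.2⟫) :=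
      mul_nonneg (by linarith) (by nlinarith)
    rw [hB, hq, hD]; simp only [minkQ]
    nlinarith [k1, k2, sq_nonneg (y.1 * ‖d.2‖ - ‖y.2‖ * d.1)]
  have hΔpos : 0 < B^2 - D*(q - 1) := by
    rcases eq_or_lt_of_le hDnn with hD0 | hD0
    · rw [← hD0]; simpa using pow_pos hBpos 2
    · nlinarith
  -- choose the parameter s with minkQ (y + s • d) = 1 and B + s * D > 0
  have key : ∃ s : ℝ, q + 2*s*B + s^2*D = 1 ∧ 0 < B + s*D := by
    by_cases hc : D = 0
    · refine ⟨(1 - q)/(2*B), ?_, ?_⟩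
      · rw [hc]; field_simp; ring
      · rw [hc]; simpa using hBpos
    · have hDpos : 0 < D := lt_of_le_of_ne hDnn (Ne.symm hc)
      set Δ := B^2 - D*(q - 1) with hΔ
      have hs2 : Real.sqrt Δ ^ 2 = Δ := Real.sq_sqrt hΔpos.le
      refine ⟨(-B + Real.sqrt Δ)/D, ?_, ?_⟩
      · field_simp
        nlinarith [hs2]
      · have heq : B + (-B + Real.sqrt Δ)/D * D = Real.sqrt Δ := by field_simp; ring
        rw [heq]; exact Real.sqrt_pos.mpr hΔpos
  obtain ⟨s, hs1, hs2⟩ := key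
  set z := y + s • d with hzdef
  have hzQ : minkQ z = 1 := by
    rw [hzdef, minkQ_add_smul, ← hB, ← hD, ← hq]; linarith
  have hz1sq : z.1^2 = ‖z.2‖^2 + 1 := by
    have := hzQ; simp only [minkQ] at this; linarith
  have hmzd : z.1 * d.1 - ⟪z.2, d.2⟫ = B + s*D := by
    simp only [hzdef, Prod.fst_add, Prod.snd_add, Prod.smul_fst, Prod.smul_snd, smul_eq_mul]
    rw [inner_add_left, real_inner_smul_left, real_inner_self_eq_norm_sq]
    rw [hB, hD]; simp only [minkQ]; ring
  have hz1pos : 0 < z.1 := by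
    by_contra hcon
    push_neg at hcon
    have hzn : ‖z.2‖ ≤ -z.1 := by nlinarith [norm_nonneg z.2]
    obtain ⟨hCS1, hCS2⟩ := abs_le.mp (abs_real_inner_le_norm z.2 d.2)
    nlinarith [norm_nonneg z.2, norm_nonneg d.2]
  refine ⟨z, mem_hyp_of z hz1sq hz1pos, ?_, ?_⟩
  · have hxz : x - z = (1 - s) • d := by
      rw [hzdef, sub_add_eq_sub_sub, ← hdd, sub_smul, one_smul]
    rw [hxz, minkQ_smul, ← hD]
    exact mul_nonneg (sq_nonneg _) hDnn
  · have hyz : y - z = (-s) • d := by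
      rw [hzdef, sub_add_cancel_left, ← neg_smul]
    rw [hyz, minkQ_smul, ← hD]
    exact mul_nonneg (sq_nonneg _) hDnn

lemma minkQ_neg (u : ℝ × E3) : minkQ (-u) = minkQ u := by
  simp [minkQ]

/-- `H` is a Cauchy surface: causally related points of `V` have a common causally
related point on `H`. -/
lemma exists_hyp (x y : ℝ × E3) (hx : x ∈ Vcone) (hy : y ∈ Vcone)
    (h : 0 ≤ minkQ (x - y)) :
    ∃ z ∈ Hyp1, 0 ≤ minkQ (x - z) ∧ 0 ≤ minkQ (y - z) := by
  rcases lt_trichotomy ((x - y).1) 0 with hlt | heq | hgt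
  · have h' : 0 ≤ minkQ (y - x) := by rw [show y - x = -(x - y) by abel, minkQ_neg]; exact h
    have h1 : 0 < (y - x).1 := by
      simp only [Prod.fst_sub] at hlt ⊢; linarith
    obtain ⟨z, hz, ha, hb⟩ := exists_hyp_aux y x hx h1 h'
    exact ⟨z, hz, hb, ha⟩
  · have h2 : (x - y).2 = 0 := by
      have hh : (0:ℝ) ≤ (x - y).1^2 - ‖(x - y).2‖^2 := h
      rw [heq] at hh
      have : ‖(x - y).2‖ = 0 := by nlinarith [norm_nonneg (x - y).2]
      exact norm_eq_zero.mp this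
    have hxy : x = y := sub_eq_zero.mp (Prod.ext heq h2)
    subst hxy
    refine ⟨(Real.sqrt (‖x.2‖^2 + 1), x.2), rfl, ?_, ?_⟩ <;>
    · simp only [minkQ, Prod.fst_sub, Prod.snd_sub, sub_self, norm_zero]
      simpa using sq_nonneg (x.1 - Real.sqrt (‖x.2‖ ^ 2 + 1))
  · exact exists_hyp_aux x y hy hgt h

lemma truncCone_lt_one {K : Set E3} (h : IsTruncCone K) {k : E3} (hk : k ∈ K) : ‖k‖ < 1 := by
  obtain ⟨-, -, a, ha, L, hL, rfl⟩ := h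
  obtain ⟨l, hl, t, ⟨ht0, ht1⟩, rfl⟩ := hk
  have h1 : a + t • (l - a) = (1 - t) • a + t • l := by module
  rw [h1]
  calc ‖(1 - t) • a + t • l‖ ≤ ‖(1 - t) • a‖ + ‖t • l‖ := norm_add_le _ _
    _ = (1 - t) * ‖a‖ + t * ‖l‖ := by
        rw [norm_smul, norm_smul, Real.norm_eq_abs, Real.norm_eq_abs,
          abs_of_pos (by linarith), abs_of_pos ht0]
    _ < 1 := by rw [hL l hl]; nlinarith

/-- Two hypercones are spacelike separated iff the underlying cones in the ball
are disjoint. -/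
theorem stmt7 (K₁ K₂ : Set E3) (h₁ : IsTruncCone K₁) (h₂ : IsTruncCone K₂) :
    (∀ x ∈ hypCone K₁, ∀ y ∈ hypCone K₂, minkQ (x - y) < 0) ↔ K₁ ∩ K₂ = ∅ := by
  constructor
  · intro hsep
    by_contra hne
    obtain ⟨k, hk1, hk2⟩ : (K₁ ∩ K₂).Nonempty := Set.nonempty_iff_ne_empty.mpr hne
    have hk : ‖k‖ < 1 := truncCone_lt_one h₁ hk1
    set r := Real.sqrt (1 - ‖k‖^2) with hr
    have hk2' : (0:ℝ) < 1 - ‖k‖^2 := by nlinarith [norm_nonneg k]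
    have hrpos : 0 < r := Real.sqrt_pos.mpr hk2'
    have hr2 : r^2 = 1 - ‖k‖^2 := Real.sq_sqrt hk2'.le
    set z : ℝ × E3 := (r⁻¹, r⁻¹ • k) with hzdef
    have hz2n : ‖z.2‖ = r⁻¹ * ‖k‖ := by
      show ‖r⁻¹ • k‖ = r⁻¹ * ‖k‖
      rw [norm_smul, Real.norm_eq_abs, abs_of_pos (inv_pos.mpr hrpos)]
    have hz1 : z.1^2 = ‖z.2‖^2 + 1 := by
      rw [hz2n, hzdef]
      field_simp
      nlinarith
    have hzH : z ∈ Hyp1 := mem_hyp_of z hz1 (by rw [hzdef]; exact inv_pos.mpr hrpos)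
    have hzV : z ∈ Vcone := by
      show ‖z.2‖ < z.1
      rw [hz2n, hzdef]
      have : (0:ℝ) < r⁻¹ := inv_pos.mpr hrpos
      nlinarith
    have hkl : klein z = k := by
      rw [klein, hzdef]
      simp only
      rw [smul_smul, inv_inv, mul_inv_cancel₀ (ne_of_gt hrpos), one_smul]
    have hmem : ∀ (K : Set E3), k ∈ K → z ∈ hypCone K := by
      intro K hkK
      refine ⟨hzV, ?_⟩
      intro w hw hQ
      have hzw : z = w := hyp_rigid hzH hw hQ
      rw [← hzw, hkl]; exact hkK
    have hc := hsep z (hmem K₁ hk1) z (hmem K₂ hk2)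
    rw [sub_self] at hc
    simp [minkQ] at hc
  · intro hdisj x hx y hy
    by_contra hcon
    push_neg at hcon
    obtain ⟨z, hzH, hxz, hyz⟩ := exists_hyp x y hx.1 hy.1 hcon
    have m1 : klein z ∈ K₁ := hx.2 z hzH hxz
    have m2 : klein z ∈ K₂ := hy.2 z hzH hyz
    exact (Set.eq_empty_iff_forall_notMem.mp hdisj (klein z)) ⟨m1, m2⟩
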